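/- Under the same twirling hypothesis, the Haar average of the Hilbert–Schmidt overlap satisfies ∫ tr[V (U†⊗U†)(ρ⊗ρ)(U⊗U)(D†⊗D)] dU = (d − tr ρ²)/(d²−1) + |tr D|² (d tr ρ² − 1)/(d(d²−1)). -/

import Mathlib

open Matrix MeasureTheory
open scoped Kronecker ComplexOrder

attribute [local instance] Matrix.linftyOpNormedAddCommGroup Matrix.linftyOpNormedSpace

/-- The swap operator `V(x ⊗ y) = y ⊗ x` on `ℂ^d ⊗ ℂ^d`. -/
def swapMatrix (d : ℕ) : Matrix (Fin d × Fin d) (Fin d × Fin d) ℂ :=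
  fun p q => if p.1 = q.2 ∧ p.2 = q.1 then 1 else 0

private lemma swap_mul_apply {d : ℕ} (M : Matrix (Fin d × Fin d) (Fin d × Fin d) ℂ) (p q) :
    (swapMatrix d * M) p q = M (p.2, p.1) q := by
  rw [Matrix.mul_apply, Finset.sum_eq_single (p.2, p.1)]
  · simp [swapMatrix]
  · intro r _ hr
    simp only [swapMatrix]
    rw [if_neg, zero_mul]
    rintro ⟨h1, h2⟩
    exact hr (Prod.ext h2.symm h1.symm)
  · simp

private lemma swap_mul_self {d : ℕ} : swapMatrix d * swapMatrix d = 1 := by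
  ext p q
  rw [swap_mul_apply]
  simp [swapMatrix, Matrix.one_apply, Prod.ext_iff, and_comm]

private lemma trace_swap_kron {d : ℕ} (A B : Matrix (Fin d) (Fin d) ℂ) :
    (swapMatrix d * (A ⊗ₖ B)).trace = (A * B).trace := by
  have h1 : (swapMatrix d * (A ⊗ₖ B)).trace = ∑ i : Fin d, ∑ j : Fin d, A j i * B i j := by
    simp only [Matrix.trace, Matrix.diag, swap_mul_apply, Matrix.kroneckerMap_apply,
      Fintype.sum_prod_type]
  have h2 : (A * B).trace = ∑ j : Fin d, ∑ i : Fin d, A j i * B i j := by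
    simp [Matrix.trace, Matrix.diag, Matrix.mul_apply]
  rw [h1, h2, Finset.sum_comm]

private lemma trace_swap {d : ℕ} : (swapMatrix d).trace = (d : ℂ) := by
  have := trace_swap_kron (1 : Matrix (Fin d) (Fin d) ℂ) 1
  rw [Matrix.one_kronecker_one, Matrix.mul_one] at this
  simpa using this

private lemma half_eq {d : ℕ} (M : Matrix (Fin d × Fin d) (Fin d × Fin d) ℂ) :
    M / 2 = (2:ℂ)⁻¹ • M := by
  rw [div_eq_mul_inv]
  have h2 : (2 : Matrix (Fin d × Fin d) (Fin d × Fin d) ℂ)⁻¹ = (2:ℂ)⁻¹ • 1 := by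
    apply Matrix.inv_eq_right_inv
    rw [Matrix.mul_smul, mul_one,
      show (2 : Matrix (Fin d × Fin d) (Fin d × Fin d) ℂ) = 1 + 1 from one_add_one_eq_two.symm]
    ext i j
    simp [Matrix.smul_apply, Matrix.one_apply]
    split <;> norm_num
  rw [h2, Matrix.mul_smul, mul_one]

private lemma herm_trace_sq_zero {d : ℕ} {X : Matrix (Fin d) (Fin d) ℂ} (hX : X.IsHermitian)
    (h : (X * X).trace = 0) : X = 0 := by
  have h' : (Xᴴ * X).trace = 0 := by rw [hX]; exact h
  have hsum : ∑ i : Fin d, ∑ j : Fin d, Complex.normSq (X j i) = 0 := by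
    have hc : ((∑ i : Fin d, ∑ j : Fin d, Complex.normSq (X j i) : ℝ) : ℂ) = 0 := by
      push_cast
      rw [← h']
      simp [Matrix.trace, Matrix.diag, Matrix.mul_apply, Matrix.conjTranspose_apply,
        Complex.normSq_eq_conj_mul_self]
    exact_mod_cast hc
  have key := (Finset.sum_eq_zero_iff_of_nonneg
    (fun i _ => Finset.sum_nonneg fun j _ => Complex.normSq_nonneg (X j i))).mp hsum
  ext i j
  have key2 := (Finset.sum_eq_zero_iff_of_nonneg
    (fun k _ => Complex.normSq_nonneg (X k j))).mp (key j (Finset.mem_univ j))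
  have := key2 i (Finset.mem_univ i)
  simpa [Complex.normSq_eq_zero] using this

noncomputable def traceCLM {d : ℕ} (K : Matrix (Fin d × Fin d) (Fin d × Fin d) ℂ) :
    Matrix (Fin d × Fin d) (Fin d × Fin d) ℂ →L[ℂ] ℂ :=
  LinearMap.toContinuousLinearMap
    { toFun := fun M => (K * M).trace
      map_add' := fun M N => by simp [Matrix.mul_add]
      map_smul' := fun c M => by simp [Matrix.mul_smul] }

lemma traceCLM_apply {d : ℕ} (K M : Matrix (Fin d × Fin d) (Fin d × Fin d) ℂ) :
    traceCLM K M = (K * M).trace := rfl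

private lemma tau_plus {d : ℕ} (X : Matrix (Fin d) (Fin d) ℂ) :
    (((2:ℂ)⁻¹ • (1 + swapMatrix d)) * (X ⊗ₖ X)).trace
      = (2:ℂ)⁻¹ * (X.trace * X.trace + (X * X).trace) := by
  rw [Matrix.smul_mul, Matrix.trace_smul, Matrix.add_mul, Matrix.one_mul, Matrix.trace_add,
    Matrix.trace_kronecker, trace_swap_kron, smul_eq_mul]

private lemma tau_minus {d : ℕ} (X : Matrix (Fin d) (Fin d) ℂ) :
    (((2:ℂ)⁻¹ • (1 - swapMatrix d)) * (X ⊗ₖ X)).trace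
      = (2:ℂ)⁻¹ * (X.trace * X.trace - (X * X).trace) := by
  rw [Matrix.smul_mul, Matrix.trace_smul, Matrix.sub_mul, Matrix.one_mul, Matrix.trace_sub,
    Matrix.trace_kronecker, trace_swap_kron, smul_eq_mul]

private lemma integrable_twirl {d : ℕ} (hd : 1 < d)
    [MeasurableSpace (Matrix.unitaryGroup (Fin d) ℂ)]
    (μ : Measure (Matrix.unitaryGroup (Fin d) ℂ)) [IsProbabilityMeasure μ]
    (X : Matrix (Fin d) (Fin d) ℂ) (hX : X.IsHermitian)
    (h : (∫ U : Matrix.unitaryGroup (Fin d) ℂ,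
          ((U : Matrix (Fin d) (Fin d) ℂ) ⊗ₖ (U : Matrix (Fin d) (Fin d) ℂ)) * (X ⊗ₖ X) *
            (((U : Matrix (Fin d) (Fin d) ℂ)ᴴ) ⊗ₖ ((U : Matrix (Fin d) (Fin d) ℂ)ᴴ)) ∂μ)
        = (2 / (d * (d + 1)) : ℂ) •
            ((((1 + swapMatrix d) / 2) * (X ⊗ₖ X)).trace • ((1 + swapMatrix d) / 2))
          + (2 / (d * (d - 1)) : ℂ) •
            ((((1 - swapMatrix d) / 2) * (X ⊗ₖ X)).trace • ((1 - swapMatrix d) / 2))) :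
    @Integrable (Matrix (Fin d × Fin d) (Fin d × Fin d) ℂ)
      (NormedAddCommGroup.toMetricSpace.toUniformSpace.toTopologicalSpace) _ _ _
      (fun U : Matrix.unitaryGroup (Fin d) ℂ =>
      ((U : Matrix (Fin d) (Fin d) ℂ) ⊗ₖ (U : Matrix (Fin d) (Fin d) ℂ)) * (X ⊗ₖ X) *
        (((U : Matrix (Fin d) (Fin d) ℂ)ᴴ) ⊗ₖ ((U : Matrix (Fin d) (Fin d) ℂ)ᴴ))) μ := by
  by_contra hni
  rw [integral_undef hni] at h
  have hd0 : (d:ℂ) ≠ 0 := Nat.cast_ne_zero.mpr (by omega)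
  have hd1 : (d:ℂ) + 1 ≠ 0 := by
    intro hc
    have h' : ((d:ℂ) + 1) = ((d+1 : ℕ) : ℂ) := by push_cast; ring
    rw [h'] at hc
    exact Nat.cast_ne_zero.mpr (by omega) hc
  have hdm1 : (d:ℂ) - 1 ≠ 0 := by
    intro hc
    have h1 : (d:ℂ) = 1 := by linear_combination hc
    have : d = 1 := by exact_mod_cast h1
    omega
  rw [half_eq, half_eq] at h
  rw [tau_plus, tau_minus] at h
  have e1 := congrArg Matrix.trace h
  have e2 := congrArg (fun M => (swapMatrix d * M).trace) h
  simp only [Matrix.trace_zero, Matrix.trace_add, Matrix.trace_smul, smul_eq_mul,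
    Matrix.trace_sub, Matrix.trace_one, trace_swap, Fintype.card_prod, Fintype.card_fin,
    Matrix.mul_zero, Matrix.mul_add, Matrix.mul_smul, Matrix.mul_sub, Matrix.mul_one,
    _root_.swap_mul_self] at e1 e2
  push_cast at e1 e2
  field_simp at e1 e2
  have hfac : (d:ℂ) * (d:ℂ) * ((d:ℂ) * (d:ℂ) - 1) ≠ 0 := by
    have h2 : (d:ℂ) * (d:ℂ) - 1 = ((d:ℂ) - 1) * ((d:ℂ) + 1) := by ring
    rw [h2]
    exact mul_ne_zero (mul_ne_zero hd0 hd0) (mul_ne_zero hdm1 hd1)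
  have hv' : (X * X).trace * ((d:ℂ) * (d:ℂ) * ((d:ℂ) * (d:ℂ) - 1)) = 0 := by
    linear_combination (-(d:ℂ)^2/2) * e2
  have hv0 : (X * X).trace = 0 := by
    rcases mul_eq_zero.mp hv' with h' | h'
    · exact h'
    · exact absurd h' hfac
  have hX0 : X = 0 := herm_trace_sq_zero hX hv0
  apply hni
  rw [hX0]
  simp only [Matrix.zero_kronecker, Matrix.mul_zero, Matrix.zero_mul]
  exact integrable_zero _ _ μ

private lemma pointwise_key {d : ℕ} (ρ D u : Matrix (Fin d) (Fin d) ℂ) :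
    (swapMatrix d * (uᴴ ⊗ₖ uᴴ * (ρ ⊗ₖ ρ) * (u ⊗ₖ u) * (Dᴴ ⊗ₖ D))).trace
      = (4:ℂ)⁻¹ *
        ((swapMatrix d * (ρ ⊗ₖ ρ) *
            ((u ⊗ₖ u) * ((D + Dᴴ) ⊗ₖ (D + Dᴴ)) * (uᴴ ⊗ₖ uᴴ))).trace
          + (swapMatrix d * (ρ ⊗ₖ ρ) *
            ((u ⊗ₖ u) * ((Complex.I • (D - Dᴴ)) ⊗ₖ (Complex.I • (D - Dᴴ))) * (uᴴ ⊗ₖ uᴴ))).trace) := by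
  have hX : ∀ X : Matrix (Fin d) (Fin d) ℂ,
      (swapMatrix d * (ρ ⊗ₖ ρ) * ((u ⊗ₖ u) * (X ⊗ₖ X) * (uᴴ ⊗ₖ uᴴ))).trace
        = ((ρ * (u * X * uᴴ)) * (ρ * (u * X * uᴴ))).trace := by
    intro X
    rw [show (u ⊗ₖ u) * (X ⊗ₖ X) * (uᴴ ⊗ₖ uᴴ) = (u * X * uᴴ) ⊗ₖ (u * X * uᴴ) by
      rw [← Matrix.mul_kronecker_mul, ← Matrix.mul_kronecker_mul]]
    rw [mul_assoc, show (ρ ⊗ₖ ρ) * ((u * X * uᴴ) ⊗ₖ (u * X * uᴴ))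
        = (ρ * (u * X * uᴴ)) ⊗ₖ (ρ * (u * X * uᴴ)) from (Matrix.mul_kronecker_mul _ _ _ _).symm]
    exact trace_swap_kron _ _
  rw [hX, hX]
  rw [show uᴴ ⊗ₖ uᴴ * (ρ ⊗ₖ ρ) * (u ⊗ₖ u) * (Dᴴ ⊗ₖ D)
      = (uᴴ * ρ * u * Dᴴ) ⊗ₖ (uᴴ * ρ * u * D) by
    rw [← Matrix.mul_kronecker_mul, ← Matrix.mul_kronecker_mul, ← Matrix.mul_kronecker_mul]]
  rw [trace_swap_kron]
  set a := ρ * (u * D * uᴴ) with ha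
  set b := ρ * (u * Dᴴ * uᴴ) with hb
  have hc : ρ * (u * (D + Dᴴ) * uᴴ) = a + b := by
    rw [ha, hb]; simp only [Matrix.mul_add, Matrix.add_mul]
  have he : ρ * (u * (Complex.I • (D - Dᴴ)) * uᴴ) = Complex.I • (a - b) := by
    rw [ha, hb]
    simp only [Matrix.mul_sub, Matrix.sub_mul, smul_mul_assoc, mul_smul_comm, smul_sub]
  rw [hc, he]
  have hcomm : (a * b).trace = (b * a).trace := Matrix.trace_mul_comm a b
  have hcyc : ((uᴴ * ρ * u * Dᴴ) * (uᴴ * ρ * u * D)).trace = (b * a).trace := by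
    have h1 : (uᴴ * ρ * u * Dᴴ) * (uᴴ * ρ * u * D)
        = uᴴ * (ρ * (u * Dᴴ * uᴴ)) * (ρ * (u * D)) := by noncomm_ring
    have h2 : b * a = (ρ * (u * Dᴴ * uᴴ)) * (ρ * (u * D)) * uᴴ := by
      rw [ha, hb]; noncomm_ring
    rw [h1, h2]; exact (Matrix.trace_mul_cycle _ _ _).symm
  rw [hcyc]
  simp only [Matrix.add_mul, Matrix.mul_add, Matrix.sub_mul, Matrix.mul_sub, smul_mul_assoc,
    mul_smul_comm, smul_smul, Complex.I_mul_I, neg_one_smul, smul_sub, Matrix.trace_add,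
    Matrix.trace_sub, Matrix.trace_neg, Matrix.trace_smul, smul_eq_mul]
  linear_combination (-(1:ℂ)/2) * hcomm

theorem haar_average_hilbert_schmidt_overlap {d : ℕ} (hd : 1 < d)
    [MeasurableSpace (Matrix.unitaryGroup (Fin d) ℂ)]
    (μ : Measure (Matrix.unitaryGroup (Fin d) ℂ)) [IsProbabilityMeasure μ]
    (ρ D : Matrix (Fin d) (Fin d) ℂ)
    (hρ : ρ.PosSemidef) (hρtr : ρ.trace = 1)
    (hD : D ∈ Matrix.unitaryGroup (Fin d) ℂ) (hDdiag : D.IsDiag)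
    (htwirl : ∀ X : Matrix (Fin d) (Fin d) ℂ, X.IsHermitian →
      (∫ U : Matrix.unitaryGroup (Fin d) ℂ,
          ((U : Matrix (Fin d) (Fin d) ℂ) ⊗ₖ (U : Matrix (Fin d) (Fin d) ℂ)) * (X ⊗ₖ X) *
            (((U : Matrix (Fin d) (Fin d) ℂ)ᴴ) ⊗ₖ ((U : Matrix (Fin d) (Fin d) ℂ)ᴴ)) ∂μ)
        = (2 / (d * (d + 1)) : ℂ) •
            ((((1 + swapMatrix d) / 2) * (X ⊗ₖ X)).trace • ((1 + swapMatrix d) / 2))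
          + (2 / (d * (d - 1)) : ℂ) •
            ((((1 - swapMatrix d) / 2) * (X ⊗ₖ X)).trace • ((1 - swapMatrix d) / 2))) :
    (∫ U : Matrix.unitaryGroup (Fin d) ℂ,
        (swapMatrix d *
          ((((U : Matrix (Fin d) (Fin d) ℂ)ᴴ) ⊗ₖ ((U : Matrix (Fin d) (Fin d) ℂ)ᴴ)) * (ρ ⊗ₖ ρ) *
            (((U : Matrix (Fin d) (Fin d) ℂ)) ⊗ₖ ((U : Matrix (Fin d) (Fin d) ℂ))) *
            (Dᴴ ⊗ₖ D))).trace ∂μ)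
      = ((d : ℂ) - (ρ * ρ).trace) / (d ^ 2 - 1)
        + ((‖D.trace‖ : ℂ) ^ 2) * ((d : ℂ) * (ρ * ρ).trace - 1) / (d * (d ^ 2 - 1)) := by
  have hd0 : (d:ℂ) ≠ 0 := Nat.cast_ne_zero.mpr (by omega)
  have hd1 : (d:ℂ) + 1 ≠ 0 := by
    intro hc
    have h' : ((d:ℂ) + 1) = ((d+1 : ℕ) : ℂ) := by push_cast; ring
    rw [h'] at hc
    exact Nat.cast_ne_zero.mpr (by omega) hc
  have hdm1 : (d:ℂ) - 1 ≠ 0 := by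
    intro hc
    have h1 : (d:ℂ) = 1 := by linear_combination hc
    have : d = 1 := by exact_mod_cast h1
    omega
  have hd21 : (d:ℂ)^2 - 1 ≠ 0 := by
    have h2 : (d:ℂ)^2 - 1 = ((d:ℂ) - 1) * ((d:ℂ) + 1) := by ring
    rw [h2]; exact mul_ne_zero hdm1 hd1
  have hDDh : D * Dᴴ = 1 := by
    rw [← Matrix.star_eq_conjTranspose]
    exact Matrix.mem_unitaryGroup_iff.mp hD
  have hDhD : Dᴴ * D = 1 := by
    rw [← Matrix.star_eq_conjTranspose]
    exact Matrix.mem_unitaryGroup_iff'.mp hD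
  have hCH : (D + Dᴴ).IsHermitian := by
    rw [Matrix.IsHermitian, Matrix.conjTranspose_add, Matrix.conjTranspose_conjTranspose, add_comm]
  have hEH : (Complex.I • (D - Dᴴ)).IsHermitian := by
    rw [Matrix.IsHermitian, Matrix.conjTranspose_smul, Matrix.conjTranspose_sub,
      Matrix.conjTranspose_conjTranspose, Complex.star_def, Complex.conj_I, neg_smul, ← smul_neg,
      neg_sub]
  have hCt := htwirl _ hCH
  have hEt := htwirl _ hEH
  have hiC := integrable_twirl hd μ _ hCH hCt
  have hiE := integrable_twirl hd μ _ hEH hEt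
  -- trace values
  have hKV : ((swapMatrix d * (ρ ⊗ₖ ρ)) * swapMatrix d).trace = 1 := by
    rw [Matrix.trace_mul_cycle, _root_.swap_mul_self, Matrix.one_mul, Matrix.trace_kronecker, hρtr,
      mul_one]
  have hKP : ((swapMatrix d * (ρ ⊗ₖ ρ)) * ((2:ℂ)⁻¹ • (1 + swapMatrix d))).trace
      = (2:ℂ)⁻¹ * ((ρ * ρ).trace + 1) := by
    rw [Matrix.mul_smul, Matrix.trace_smul, smul_eq_mul, Matrix.mul_add, Matrix.mul_one,
      Matrix.trace_add, trace_swap_kron, hKV]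
  have hKQ : ((swapMatrix d * (ρ ⊗ₖ ρ)) * ((2:ℂ)⁻¹ • (1 - swapMatrix d))).trace
      = (2:ℂ)⁻¹ * ((ρ * ρ).trace - 1) := by
    rw [Matrix.mul_smul, Matrix.trace_smul, smul_eq_mul, Matrix.mul_sub, Matrix.mul_one,
      Matrix.trace_sub, trace_swap_kron, hKV]
  have htrC : (D + Dᴴ).trace = D.trace + star D.trace := by
    rw [Matrix.trace_add, Matrix.trace_conjTranspose]
  have htrCC : ((D + Dᴴ) * (D + Dᴴ)).trace
      = (D * D).trace + star ((D * D).trace) + 2 * d := by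
    rw [Matrix.mul_add, Matrix.add_mul, Matrix.add_mul, hDDh, hDhD]
    rw [Matrix.trace_add, Matrix.trace_add, Matrix.trace_add, Matrix.trace_one,
      show Dᴴ * Dᴴ = (D * D)ᴴ by rw [Matrix.conjTranspose_mul], Matrix.trace_conjTranspose]
    simp [Fintype.card_fin]
    ring
  have htrE : (Complex.I • (D - Dᴴ)).trace = Complex.I * (D.trace - star D.trace) := by
    rw [Matrix.trace_smul, Matrix.trace_sub, Matrix.trace_conjTranspose, smul_eq_mul]
  have htrE2 : (Complex.I • (D - Dᴴ)).trace * (Complex.I • (D - Dᴴ)).trace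
      = -((D.trace - star D.trace) * (D.trace - star D.trace)) := by
    rw [htrE]
    linear_combination (D.trace - star D.trace) * (D.trace - star D.trace) * Complex.I_mul_I
  have htrEE : ((Complex.I • (D - Dᴴ)) * (Complex.I • (D - Dᴴ))).trace
      = -((D * D).trace + star ((D * D).trace) - 2 * d) := by
    rw [smul_mul_assoc, mul_smul_comm, smul_smul, Complex.I_mul_I, neg_one_smul,
      Matrix.trace_neg]
    rw [Matrix.mul_sub, Matrix.sub_mul, Matrix.sub_mul, hDDh, hDhD]
    rw [Matrix.trace_sub, Matrix.trace_sub, Matrix.trace_sub, Matrix.trace_one,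
      show Dᴴ * Dᴴ = (D * D)ᴴ by rw [Matrix.conjTranspose_mul], Matrix.trace_conjTranspose]
    simp [Fintype.card_fin]
    ring
  have habs : ((‖D.trace‖ : ℂ)) ^ 2 = D.trace * star D.trace := by
    rw [Complex.star_def, Complex.mul_conj, ← Complex.ofReal_pow, Complex.sq_norm]
  calc
    (∫ U : Matrix.unitaryGroup (Fin d) ℂ,
        (swapMatrix d *
          ((((U : Matrix (Fin d) (Fin d) ℂ)ᴴ) ⊗ₖ ((U : Matrix (Fin d) (Fin d) ℂ)ᴴ)) * (ρ ⊗ₖ ρ) *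
            (((U : Matrix (Fin d) (Fin d) ℂ)) ⊗ₖ ((U : Matrix (Fin d) (Fin d) ℂ))) *
            (Dᴴ ⊗ₖ D))).trace ∂μ)
      = ∫ U : Matrix.unitaryGroup (Fin d) ℂ,
          (4:ℂ)⁻¹ • (traceCLM (swapMatrix d * (ρ ⊗ₖ ρ))
              (((U : Matrix (Fin d) (Fin d) ℂ) ⊗ₖ (U : Matrix (Fin d) (Fin d) ℂ)) *
                ((D + Dᴴ) ⊗ₖ (D + Dᴴ)) *
                (((U : Matrix (Fin d) (Fin d) ℂ)ᴴ) ⊗ₖ ((U : Matrix (Fin d) (Fin d) ℂ)ᴴ)))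
            + traceCLM (swapMatrix d * (ρ ⊗ₖ ρ))
              (((U : Matrix (Fin d) (Fin d) ℂ) ⊗ₖ (U : Matrix (Fin d) (Fin d) ℂ)) *
                ((Complex.I • (D - Dᴴ)) ⊗ₖ (Complex.I • (D - Dᴴ))) *
                (((U : Matrix (Fin d) (Fin d) ℂ)ᴴ) ⊗ₖ ((U : Matrix (Fin d) (Fin d) ℂ)ᴴ)))) ∂μ := by
        refine integral_congr_ae (Filter.Eventually.of_forall fun U => ?_)
        beta_reduce
        rw [pointwise_key, traceCLM_apply, traceCLM_apply, smul_eq_mul]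
    _ = (4:ℂ)⁻¹ •
          ((∫ U : Matrix.unitaryGroup (Fin d) ℂ, traceCLM (swapMatrix d * (ρ ⊗ₖ ρ))
              (((U : Matrix (Fin d) (Fin d) ℂ) ⊗ₖ (U : Matrix (Fin d) (Fin d) ℂ)) *
                ((D + Dᴴ) ⊗ₖ (D + Dᴴ)) *
                (((U : Matrix (Fin d) (Fin d) ℂ)ᴴ) ⊗ₖ ((U : Matrix (Fin d) (Fin d) ℂ)ᴴ))) ∂μ)
            + ∫ U : Matrix.unitaryGroup (Fin d) ℂ, traceCLM (swapMatrix d * (ρ ⊗ₖ ρ))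
              (((U : Matrix (Fin d) (Fin d) ℂ) ⊗ₖ (U : Matrix (Fin d) (Fin d) ℂ)) *
                ((Complex.I • (D - Dᴴ)) ⊗ₖ (Complex.I • (D - Dᴴ))) *
                (((U : Matrix (Fin d) (Fin d) ℂ)ᴴ) ⊗ₖ ((U : Matrix (Fin d) (Fin d) ℂ)ᴴ))) ∂μ) := by
        rw [integral_smul, integral_add (by exact (traceCLM _).integrable_comp hiC)
          (by exact (traceCLM _).integrable_comp hiE)]
    _ = (4:ℂ)⁻¹ •
          (traceCLM (swapMatrix d * (ρ ⊗ₖ ρ))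
            (∫ U : Matrix.unitaryGroup (Fin d) ℂ,
              ((U : Matrix (Fin d) (Fin d) ℂ) ⊗ₖ (U : Matrix (Fin d) (Fin d) ℂ)) *
                ((D + Dᴴ) ⊗ₖ (D + Dᴴ)) *
                (((U : Matrix (Fin d) (Fin d) ℂ)ᴴ) ⊗ₖ ((U : Matrix (Fin d) (Fin d) ℂ)ᴴ)) ∂μ)
          + traceCLM (swapMatrix d * (ρ ⊗ₖ ρ))
            (∫ U : Matrix.unitaryGroup (Fin d) ℂ,
              ((U : Matrix (Fin d) (Fin d) ℂ) ⊗ₖ (U : Matrix (Fin d) (Fin d) ℂ)) *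
                ((Complex.I • (D - Dᴴ)) ⊗ₖ (Complex.I • (D - Dᴴ))) *
                (((U : Matrix (Fin d) (Fin d) ℂ)ᴴ) ⊗ₖ ((U : Matrix (Fin d) (Fin d) ℂ)ᴴ)) ∂μ)) := by
        exact congrArg _ (congrArg₂ _ (ContinuousLinearMap.integral_comp_comm _ hiC)
          (ContinuousLinearMap.integral_comp_comm _ hiE))
    _ = ((d : ℂ) - (ρ * ρ).trace) / (d ^ 2 - 1)
        + ((‖D.trace‖ : ℂ) ^ 2) * ((d : ℂ) * (ρ * ρ).trace - 1) / (d * (d ^ 2 - 1)) := by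
        rw [hCt, hEt]
        simp only [half_eq]
        simp only [map_add, _root_.map_smul, traceCLM_apply, smul_eq_mul]
        rw [tau_plus, tau_plus, tau_minus, tau_minus, htrE2, htrC, htrCC, htrEE]
        simp only [Matrix.mul_one, Matrix.mul_sub, Matrix.trace_sub, trace_swap_kron, hKV]
        rw [habs]
        field_simp
        ring
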